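/- Suppose F : [0,T] × ℝ^{n×n} → ℝ^{n×n} satisfies F(t, Yᵀ)ᵀ = F(t, Y) for all Y, and let S₀ ∈ ℝ^{r×r} be symmetric, Y₀ = U₀S₀U₀ᵀ. Then in the new low-rank integrator L(t) = K(t) for all t, V₁ = U₁, N = M, and the result Y₁ = U₁S₁U₁ᵀ of one step is symmetric. -/

import Mathlib

attribute [local instance] Matrix.frobeniusNormedAddCommGroup Matrix.frobeniusNormedSpace

open Matrix

/-- Transpose as a continuous linear map (frobenius norm). -/
noncomputable def transCLM (r : ℕ) :
    Matrix (Fin r) (Fin r) ℝ →L[ℝ] Matrix (Fin r) (Fin r) ℝ :=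
  LinearMap.mkContinuous
    (Matrix.transposeLinearEquiv (Fin r) (Fin r) ℝ ℝ).toLinearMap 1
    (fun x => by
      simp only [LinearEquiv.coe_coe, Matrix.transposeLinearEquiv_apply, one_mul]
      exact le_of_eq (Matrix.frobenius_norm_transpose x))

/-- symmetry preservation of the new low-rank integrator when
`F(t,Yᵀ)ᵀ = F(t,Y)`. -/
theorem stmt12 {n r : ℕ} (t₀ t₁ : ℝ) (ht : t₀ ≤ t₁) (Lip : ℝ)
    (F : ℝ → Matrix (Fin n) (Fin n) ℝ → Matrix (Fin n) (Fin n) ℝ)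
    (hLip : ∀ t, ∀ Y Y' : Matrix (Fin n) (Fin n) ℝ, ‖F t Y - F t Y'‖ ≤ Lip * ‖Y - Y'‖)
    (hFsym : ∀ t, ∀ Y : Matrix (Fin n) (Fin n) ℝ, (F t Yᵀ)ᵀ = F t Y)
    (U₀ : Matrix (Fin n) (Fin r) ℝ) (hU₀ : U₀ᵀ * U₀ = 1)
    (S₀ : Matrix (Fin r) (Fin r) ℝ) (hS₀ : S₀ᵀ = S₀)
    -- K-step: K' = F(t, K U₀ᵀ) U₀, K(t₀) = U₀ S₀
    (K : ℝ → Matrix (Fin n) (Fin r) ℝ) (hK0 : K t₀ = U₀ * S₀)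
    (hKderiv : ∀ t ∈ Set.Icc t₀ t₁, HasDerivAt K (F t (K t * U₀ᵀ) * U₀) t)
    (hKcont : ContinuousOn K (Set.Icc t₀ t₁))
    -- L-step: L' = F(t, U₀ Lᵀ)ᵀ U₀, L(t₀) = U₀ S₀ᵀ
    (Lm : ℝ → Matrix (Fin n) (Fin r) ℝ) (hL0 : Lm t₀ = U₀ * S₀ᵀ)
    (hLderiv : ∀ t ∈ Set.Icc t₀ t₁, HasDerivAt Lm ((F t (U₀ * (Lm t)ᵀ))ᵀ * U₀) t)
    (hLcont : ContinuousOn Lm (Set.Icc t₀ t₁))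
    -- QR of K(t₁): K(t₁) = U₁ R₁; one takes V₁ = U₁ and N = M = U₁ᵀ U₀
    (U₁ : Matrix (Fin n) (Fin r) ℝ) (R₁ : Matrix (Fin r) (Fin r) ℝ)
    (hQR : K t₁ = U₁ * R₁) (hU₁ : U₁ᵀ * U₁ = 1)
    -- S-step with V₁ = U₁: S' = U₁ᵀ F(t, U₁ S U₁ᵀ) U₁, S(t₀) = M S₀ Mᵀ
    (S : ℝ → Matrix (Fin r) (Fin r) ℝ)
    (hSinit : S t₀ = (U₁ᵀ * U₀) * S₀ * (U₁ᵀ * U₀)ᵀ)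
    (hSderiv : ∀ t ∈ Set.Icc t₀ t₁, HasDerivAt S (U₁ᵀ * F t (U₁ * S t * U₁ᵀ) * U₁) t) :
    (∀ t ∈ Set.Icc t₀ t₁, Lm t = K t) ∧
      (U₁ * S t₁ * U₁ᵀ)ᵀ = U₁ * S t₁ * U₁ᵀ := by
  have habs : ∀ t, ∀ Y Y' : Matrix (Fin n) (Fin n) ℝ,
      ‖F t Y - F t Y'‖ ≤ |Lip| * ‖Y - Y'‖ := fun t Y Y' =>
    (hLip t Y Y').trans (mul_le_mul_of_nonneg_right (le_abs_self Lip) (norm_nonneg _))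
  -- Part 1: Lm = K on [t₀, t₁]
  have part1 : ∀ t ∈ Set.Icc t₀ t₁, Lm t = K t := by
    set v : ℝ → Matrix (Fin n) (Fin r) ℝ → Matrix (Fin n) (Fin r) ℝ :=
      fun t X => F t (X * U₀ᵀ) * U₀ with hv
    have hvlip : ∀ t, LipschitzWith (|Lip| * ‖U₀‖ * ‖U₀‖).toNNReal (v t) := by
      intro t
      apply LipschitzWith.of_dist_le_mul
      intro X X'
      rw [dist_eq_norm, dist_eq_norm,
        Real.coe_toNNReal _ (by positivity : (0:ℝ) ≤ |Lip| * ‖U₀‖ * ‖U₀‖)]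
      have h1 : v t X - v t X' = (F t (X * U₀ᵀ) - F t (X' * U₀ᵀ)) * U₀ := by
        show F t (X * U₀ᵀ) * U₀ - F t (X' * U₀ᵀ) * U₀ = _
        rw [Matrix.sub_mul]
      rw [h1]
      calc ‖(F t (X * U₀ᵀ) - F t (X' * U₀ᵀ)) * U₀‖
          ≤ ‖F t (X * U₀ᵀ) - F t (X' * U₀ᵀ)‖ * ‖U₀‖ := frobenius_norm_mul _ _
        _ ≤ (|Lip| * ‖X * U₀ᵀ - X' * U₀ᵀ‖) * ‖U₀‖ := by
            gcongr; exact habs t _ _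
        _ = (|Lip| * ‖(X - X') * U₀ᵀ‖) * ‖U₀‖ := by rw [Matrix.sub_mul]
        _ ≤ (|Lip| * (‖X - X'‖ * ‖U₀ᵀ‖)) * ‖U₀‖ := by
            gcongr; exact frobenius_norm_mul _ _
        _ = |Lip| * ‖U₀‖ * ‖U₀‖ * ‖X - X'‖ := by
            rw [frobenius_norm_transpose]; ring
    have := ODE_solution_unique (E := Matrix (Fin n) (Fin r) ℝ) (v := v)
      (f := Lm) (g := K) (a := t₀) (b := t₁) hvlip hLcont
      (fun t htm => by
        have h := hLderiv t (Set.Ico_subset_Icc_self htm)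
        have heq : (F t (U₀ * (Lm t)ᵀ))ᵀ * U₀ = v t (Lm t) := by
          have h2 : U₀ * (Lm t)ᵀ = (Lm t * U₀ᵀ)ᵀ := by
            rw [transpose_mul, transpose_transpose]
          rw [h2, hFsym]
        exact (heq ▸ h).hasDerivWithinAt)
      hKcont
      (fun t htm => ((hKderiv t (Set.Ico_subset_Icc_self htm)).hasDerivWithinAt))
      (by rw [hK0, hL0, hS₀])
    exact fun t htm => this htm
  refine ⟨part1, ?_⟩
  -- Part 2: symmetry of S
  set w : ℝ → Matrix (Fin r) (Fin r) ℝ → Matrix (Fin r) (Fin r) ℝ :=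
    fun t X => U₁ᵀ * F t (U₁ * X * U₁ᵀ) * U₁ with hw
  have hScont : ContinuousOn S (Set.Icc t₀ t₁) := fun t htm =>
    (hSderiv t htm).continuousAt.continuousWithinAt
  have hTcont : ContinuousOn (fun t => (S t)ᵀ) (Set.Icc t₀ t₁) :=
    (transCLM r).continuous.comp_continuousOn hScont
  have hwlip : ∀ t, LipschitzWith (|Lip| * (‖U₁ᵀ‖ * ‖U₁‖) * (‖U₁‖ * ‖U₁ᵀ‖)).toNNReal (w t) := by
    intro t
    apply LipschitzWith.of_dist_le_mul
    intro X X'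
    rw [dist_eq_norm, dist_eq_norm,
      Real.coe_toNNReal _ (by positivity : (0:ℝ) ≤ |Lip| * (‖U₁ᵀ‖ * ‖U₁‖) * (‖U₁‖ * ‖U₁ᵀ‖))]
    have h1 : w t X - w t X' = U₁ᵀ * (F t (U₁ * X * U₁ᵀ) - F t (U₁ * X' * U₁ᵀ)) * U₁ := by
      show U₁ᵀ * F t (U₁ * X * U₁ᵀ) * U₁ - U₁ᵀ * F t (U₁ * X' * U₁ᵀ) * U₁ = _
      rw [Matrix.mul_sub, Matrix.sub_mul]
    rw [h1]
    calc ‖U₁ᵀ * (F t (U₁ * X * U₁ᵀ) - F t (U₁ * X' * U₁ᵀ)) * U₁‖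
        ≤ ‖U₁ᵀ * (F t (U₁ * X * U₁ᵀ) - F t (U₁ * X' * U₁ᵀ))‖ * ‖U₁‖ := frobenius_norm_mul _ _
      _ ≤ (‖U₁ᵀ‖ * ‖F t (U₁ * X * U₁ᵀ) - F t (U₁ * X' * U₁ᵀ)‖) * ‖U₁‖ := by
          gcongr; exact frobenius_norm_mul _ _
      _ ≤ (‖U₁ᵀ‖ * (|Lip| * ‖U₁ * X * U₁ᵀ - U₁ * X' * U₁ᵀ‖)) * ‖U₁‖ := by
          gcongr; exact habs t _ _
      _ = (‖U₁ᵀ‖ * (|Lip| * ‖U₁ * (X - X') * U₁ᵀ‖)) * ‖U₁‖ := by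
          rw [Matrix.mul_sub, Matrix.sub_mul]
      _ ≤ (‖U₁ᵀ‖ * (|Lip| * (‖U₁ * (X - X')‖ * ‖U₁ᵀ‖))) * ‖U₁‖ := by
          gcongr; exact frobenius_norm_mul _ _
      _ ≤ (‖U₁ᵀ‖ * (|Lip| * ((‖U₁‖ * ‖X - X'‖) * ‖U₁ᵀ‖))) * ‖U₁‖ := by
          gcongr; exact frobenius_norm_mul _ _
      _ = |Lip| * (‖U₁ᵀ‖ * ‖U₁‖) * (‖U₁‖ * ‖U₁ᵀ‖) * ‖X - X'‖ := by ring
  have key : Set.EqOn (fun t => (S t)ᵀ) S (Set.Icc t₀ t₁) := by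
    apply ODE_solution_unique (v := w) hwlip hTcont
      ?_ hScont
      (fun t htm => ((hSderiv t (Set.Ico_subset_Icc_self htm)).hasDerivWithinAt))
      ?_
    · intro t htm
      have h := hSderiv t (Set.Ico_subset_Icc_self htm)
      have hT : HasDerivAt (fun t => (S t)ᵀ) ((U₁ᵀ * F t (U₁ * S t * U₁ᵀ) * U₁)ᵀ) t := by
        have := (transCLM r).hasFDerivAt.comp_hasDerivAt t h
        exact this
      have heq : (U₁ᵀ * F t (U₁ * S t * U₁ᵀ) * U₁)ᵀ = w t ((S t)ᵀ) := by
        have h2 : U₁ * (S t)ᵀ * U₁ᵀ = (U₁ * S t * U₁ᵀ)ᵀ := by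
          rw [transpose_mul, transpose_mul, transpose_transpose]
          rw [Matrix.mul_assoc]
        have h3 : (F t (U₁ * S t * U₁ᵀ))ᵀ = F t ((U₁ * S t * U₁ᵀ)ᵀ) := by
          simpa using hFsym t (U₁ * S t * U₁ᵀ)ᵀ
        show _ = U₁ᵀ * F t (U₁ * (S t)ᵀ * U₁ᵀ) * U₁
        rw [transpose_mul, transpose_mul, transpose_transpose, h3, h2, Matrix.mul_assoc, Matrix.mul_assoc]
      exact (heq ▸ hT).hasDerivWithinAt
    · show (S t₀)ᵀ = S t₀
      rw [hSinit]
      simp [transpose_mul, transpose_transpose, hS₀, Matrix.mul_assoc]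
  have hSsym : (S t₁)ᵀ = S t₁ := key (Set.right_mem_Icc.mpr ht)
  rw [transpose_mul, transpose_mul, transpose_transpose, hSsym, Matrix.mul_assoc]
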